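/- arXiv:2010.12936 — 5 statements merged into one kernel-verified Lean document; each statement's English description precedes it below -/
import Mathlib

section
/- In an algebra A over a field of characteristic not 2 satisfying ⟨a,a,a⟩ = 0 and ⟨aa,a,a⟩ = 0, where ⟨a,b,c⟩ = (ab)c - a(bc) + b(ac), define e_1 = x and e_{n+1} = x·e_n for a fixed element x. Then e_k · e_l = 0 for all k > 1 and l > 0. -/
/-- The Leibniz discriminant ⟨a,b,c⟩ = (ab)c - a(bc) + b(ac). -/
def leibTriple {A : Type*} [NonUnitalNonAssocRing A] (a b c : A) : A :=
  (a * b) * c - a * (b * c) + b * (a * c)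

theorem stmt_0 {K A : Type*} [Field K] [NonUnitalNonAssocRing A] [Module K A]
    [SMulCommClass K A A] [IsScalarTower K A A] (hchar : (2 : K) ≠ 0)
    (h1 : ∀ a : A, leibTriple a a a = 0)
    (h2 : ∀ a : A, leibTriple (a * a) a a = 0)
    (x : A) (e : ℕ → A) (he1 : e 1 = x)
    (heS : ∀ n : ℕ, 1 ≤ n → e (n + 1) = x * e n) :
    ∀ k l : ℕ, 1 < k → 0 < l → e k * e l = 0 := by
  -- dividing by 2
  have half : ∀ v : A, v + v = 0 → v = 0 := by
    intro v hv
    have hv2 : (2 : K) • v = 0 := by rw [two_smul]; exact hv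
    have : ((2 : K)⁻¹ * 2) • v = 0 := by rw [mul_smul, hv2, smul_zero]
    rwa [inv_mul_cancel₀ hchar, one_smul] at this
  -- (aa)a = 0
  have cube : ∀ a : A, (a * a) * a = 0 := by
    intro a
    have h := h1 a
    unfold leibTriple at h
    rwa [sub_add_cancel] at h
  -- (aa)(aa) = 0
  have q4 : ∀ a : A, (a * a) * (a * a) = 0 := by
    intro a
    have h := h2 a
    unfold leibTriple at h
    rw [cube a] at h
    simp only [zero_mul, mul_zero, zero_sub, add_zero, neg_eq_zero] at h
    exact h
  -- partial linearization of cube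
  have Mlem : ∀ a b : A, (a * a) * b + (a * b) * a + (b * a) * a = 0 := by
    intro a b
    apply half
    have key : ((a + b) * (a + b)) * (a + b) - ((a - b) * (a - b)) * (a - b)
        = ((a * a) * b + (a * b) * a + (b * a) * a)
          + ((a * a) * b + (a * b) * a + (b * a) * a)
          + ((b * b) * b + (b * b) * b) := by
      simp only [mul_add, add_mul, mul_sub, sub_mul]
      abel
    have h0 : ((a * a) * b + (a * b) * a + (b * a) * a)
          + ((a * a) * b + (a * b) * a + (b * a) * a)
          + ((b * b) * b + (b * b) * b) = 0 := by
      rw [← key, cube (a + b), cube (a - b), sub_self]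
    rw [cube b] at h0
    simpa using h0
  -- full linearization of cube
  have T3 : ∀ a b c : A, (a * b) * c + (b * a) * c + (a * c) * b + (c * a) * b
      + (b * c) * a + (c * b) * a = 0 := by
    intro a b c
    have key : ((a + c) * (a + c)) * b + ((a + c) * b) * (a + c) + (b * (a + c)) * (a + c)
        = ((a * a) * b + (a * b) * a + (b * a) * a)
          + ((c * c) * b + (c * b) * c + (b * c) * c)
          + ((a * b) * c + (b * a) * c + (a * c) * b + (c * a) * b
              + (b * c) * a + (c * b) * a) := by
      simp only [mul_add, add_mul]
      abel
    have h0 := Mlem (a + c) b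
    rw [key, Mlem a b, Mlem c b] at h0
    simpa using h0
  -- bidegree (2,2) part of q
  have Dq : ∀ a b : A, (a * a) * (b * b) + (b * b) * (a * a)
      + (a * b + b * a) * (a * b + b * a) = 0 := by
    intro a b
    apply half
    have key : ((a + b) * (a + b)) * ((a + b) * (a + b))
          + ((a - b) * (a - b)) * ((a - b) * (a - b))
        = ((a * a) * (a * a) + (a * a) * (a * a))
          + ((b * b) * (b * b) + (b * b) * (b * b))
          + (((a * a) * (b * b) + (b * b) * (a * a) + (a * b + b * a) * (a * b + b * a))
             + ((a * a) * (b * b) + (b * b) * (a * a)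
                + (a * b + b * a) * (a * b + b * a))) := by
      simp only [mul_add, add_mul, mul_sub, sub_mul]
      abel
    have h0 := key
    rw [q4 (a + b), q4 (a - b), q4 a, q4 b] at h0
    simpa using h0.symm
  -- linearize Dq in its first slot
  have Dc : ∀ a c b : A, (a * c + c * a) * (b * b) + (b * b) * (a * c + c * a)
      + (a * b + b * a) * (c * b + b * c) + (c * b + b * c) * (a * b + b * a) = 0 := by
    intro a c b
    have key : ((a + c) * (a + c)) * (b * b) + (b * b) * ((a + c) * (a + c))
          + ((a + c) * b + b * (a + c)) * ((a + c) * b + b * (a + c))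
        = ((a * a) * (b * b) + (b * b) * (a * a) + (a * b + b * a) * (a * b + b * a))
          + ((c * c) * (b * b) + (b * b) * (c * c) + (c * b + b * c) * (c * b + b * c))
          + ((a * c + c * a) * (b * b) + (b * b) * (a * c + c * a)
             + (a * b + b * a) * (c * b + b * c) + (c * b + b * c) * (a * b + b * a)) := by
      simp only [mul_add, add_mul]
      abel
    have h0 := Dq (a + c) b
    rw [key, Dq a b, Dq c b] at h0
    simpa using h0
  -- full linearization of q
  have E4 : ∀ a c b d : A, (a * c + c * a) * (b * d + d * b) + (b * d + d * b) * (a * c + c * a)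
      + (a * b + b * a) * (c * d + d * c) + (c * d + d * c) * (a * b + b * a)
      + (a * d + d * a) * (c * b + b * c) + (c * b + b * c) * (a * d + d * a) = 0 := by
    intro a c b d
    have key : (a * c + c * a) * ((b + d) * (b + d)) + ((b + d) * (b + d)) * (a * c + c * a)
          + (a * (b + d) + (b + d) * a) * (c * (b + d) + (b + d) * c)
          + (c * (b + d) + (b + d) * c) * (a * (b + d) + (b + d) * a)
        = ((a * c + c * a) * (b * b) + (b * b) * (a * c + c * a)
            + (a * b + b * a) * (c * b + b * c) + (c * b + b * c) * (a * b + b * a))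
          + ((a * c + c * a) * (d * d) + (d * d) * (a * c + c * a)
            + (a * d + d * a) * (c * d + d * c) + (c * d + d * c) * (a * d + d * a))
          + ((a * c + c * a) * (b * d + d * b) + (b * d + d * b) * (a * c + c * a)
            + (a * b + b * a) * (c * d + d * c) + (c * d + d * c) * (a * b + b * a)
            + (a * d + d * a) * (c * b + b * c) + (c * b + b * c) * (a * d + d * a)) := by
      simp only [mul_add, add_mul]
      abel
    have h0 := Dc a c (b + d)
    rw [key, Dc a c b, Dc a c d] at h0
    simpa using h0
  -- odd part of q(a ± z)
  have ODD : ∀ a z : A, (a * a) * (a * z + z * a) + (a * z + z * a) * (a * a)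
      + (a * z + z * a) * (z * z) + (z * z) * (a * z + z * a) = 0 := by
    intro a z
    apply half
    have key : ((a + z) * (a + z)) * ((a + z) * (a + z))
          - ((a - z) * (a - z)) * ((a - z) * (a - z))
        = ((a * a) * (a * z + z * a) + (a * z + z * a) * (a * a)
            + (a * z + z * a) * (z * z) + (z * z) * (a * z + z * a))
          + ((a * a) * (a * z + z * a) + (a * z + z * a) * (a * a)
            + (a * z + z * a) * (z * z) + (z * z) * (a * z + z * a)) := by
      simp only [mul_add, add_mul, mul_sub, sub_mul]
      abel
    rw [← key, q4 (a + z), q4 (a - z), sub_self]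
  -- basic facts about e
  have hxe : ∀ n, 1 ≤ n → x * e n = e (n + 1) := fun n hn => (heS n hn).symm
  have e2x : e 2 = x * x := by rw [heS 1 le_rfl, he1]
  suffices H : ∀ N k l, 2 ≤ k → 1 ≤ l → k + l = N → e k * e l = 0 by
    intro k l hk hl
    exact H (k + l) k l hk hl rfl
  intro N
  induction N using Nat.strong_induction_on with
  | _ N IH =>
  intro k l hk hl hkl
  have S1 : ∀ j, 2 ≤ j → j + 1 < N → e j * x = 0 := by
    intro j hj2 hjlt
    have := IH (j + 1) hjlt j 1 hj2 le_rfl rfl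
    rwa [he1] at this
  rcases le_or_gt 5 N with h5 | h5
  · -- general case N ≥ 5
    obtain ⟨m, hmN, hm2⟩ : ∃ m, N = m + 3 ∧ 2 ≤ m := ⟨N - 3, by omega, by omega⟩
    subst hmN
    -- diagonal: e j * e j = 0 for 2 ≤ j ≤ m
    have Dm : ∀ j, 2 ≤ j → j ≤ m → e j * e j = 0 := by
      intro j
      induction j using Nat.strong_induction_on with
      | _ j IHj =>
      intro hj2 hjm
      rcases eq_or_lt_of_le hj2 with h | h
      · rw [← h, e2x]; exact q4 x
      · obtain ⟨p, rfl⟩ : ∃ p, j = p + 1 := ⟨j - 1, by omega⟩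
        have hp2 : 2 ≤ p := by omega
        have hpp : e p * e p = 0 := IHj p (by omega) hp2 (by omega)
        have hpx : e p * x = 0 := S1 p hp2 (by omega)
        have h0 := E4 x x (e p) (e p)
        rw [hxe p (by omega), hpx, hpp] at h0
        simp only [add_zero, zero_add, mul_zero, zero_mul] at h0
        have h0' : (e (p + 1) * e (p + 1) + e (p + 1) * e (p + 1))
            + (e (p + 1) * e (p + 1) + e (p + 1) * e (p + 1)) = 0 := by
          calc (e (p + 1) * e (p + 1) + e (p + 1) * e (p + 1))
                + (e (p + 1) * e (p + 1) + e (p + 1) * e (p + 1))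
              = e (p + 1) * e (p + 1) + e (p + 1) * e (p + 1) + e (p + 1) * e (p + 1)
                + e (p + 1) * e (p + 1) := by abel
            _ = 0 := h0
        exact half _ (half _ h0')
    -- symmetric relation for e 2
    have ysym : e 2 * e (m + 1) + e (m + 1) * e 2 = 0 := by
      have hSm : e m * x = 0 := S1 m hm2 (by omega)
      have hDm : e m * e m = 0 := Dm m hm2 le_rfl
      have h0 := ODD x (e m)
      rw [hxe m (by omega), hSm, hDm] at h0
      simp only [add_zero, mul_zero, zero_mul] at h0
      rw [← e2x] at h0
      simpa using h0
    -- consequence of T3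
    have RT : ∀ p q, 2 ≤ p → 2 ≤ q → p + q = m + 2 →
        e (p + 1) * e q + e (q + 1) * e p = 0 := by
      intro p q hp hq hpq
      have h0 := T3 x (e p) (e q)
      rw [hxe p (by omega), hxe q (by omega), S1 p hp (by omega), S1 q hq (by omega),
        IH (p + q) (by omega) p q hp (by omega) rfl,
        IH (q + p) (by omega) q p hq (by omega) rfl] at h0
      simp only [zero_mul, add_zero, zero_add] at h0
      exact h0
    -- consequence of E4
    have RE : ∀ p q, 2 ≤ p → 2 ≤ q → p + q = m + 1 →
        e (p + 1) * e (q + 1) + e (q + 1) * e (p + 1) = 0 := by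
      intro p q hp hq hpq
      apply half
      have h0 := E4 x x (e p) (e q)
      rw [hxe p (by omega), hxe q (by omega), S1 p hp (by omega), S1 q hq (by omega),
        IH (p + q) (by omega) p q hp (by omega) rfl,
        IH (q + p) (by omega) q p hq (by omega) rfl] at h0
      simp only [zero_mul, mul_zero, add_zero, zero_add] at h0
      calc (e (p + 1) * e (q + 1) + e (q + 1) * e (p + 1))
            + (e (p + 1) * e (q + 1) + e (q + 1) * e (p + 1))
          = e (p + 1) * e (q + 1) + e (q + 1) * e (p + 1) + e (q + 1) * e (p + 1)
            + e (p + 1) * e (q + 1) := by abel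
        _ = 0 := h0
    -- descending step
    have Qdesc : ∀ a b, 2 ≤ a → 2 ≤ b → (a + 2) + b = m + 3 →
        e (a + 2) * e b = e (a + 1) * e (b + 1) := by
      intro a b ha hb hab
      have hA := RT (a + 1) b (by omega) hb (by omega)
      simp only [show a + 1 + 1 = a + 2 by omega] at hA
      have hB := RE b a hb ha (by omega)
      have hx1 : e (a + 2) * e b = -(e (b + 1) * e (a + 1)) := by
        rwa [add_eq_zero_iff_eq_neg] at hA
      have hx2 : -(e (b + 1) * e (a + 1)) = e (a + 1) * e (b + 1) := by
        rwa [add_eq_zero_iff_neg_eq] at hB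
      exact hx1.trans hx2
    -- all middle products equal e 3 * e m
    have Qconst : ∀ a b, 2 ≤ b → (a + 3) + b = m + 3 → e (a + 3) * e b = e 3 * e m := by
      intro a
      induction a with
      | zero =>
        intro b hb hab
        have hbm : b = m := by omega
        subst hbm
        rfl
      | succ a IHa =>
        intro b hb hab
        have hd := Qdesc (a + 2) b (by omega) hb (by omega)
        simp only [show a + 2 + 2 = a + 1 + 3 by omega, show a + 2 + 1 = a + 3 by omega] at hd
        rw [hd]
        exact IHa (b + 1) (by omega) (by omega)
    have Q3 : e 3 * e m = 0 := by
      apply half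
      have hA := RT 2 m (by omega) hm2 (by omega)
      simp only [show (2 : ℕ) + 1 = 3 by omega] at hA
      have hB : e (m + 1) * e 2 = e 3 * e m := by
        have := Qconst (m - 2) 2 le_rfl (by omega)
        simpa only [show m - 2 + 3 = m + 1 by omega] using this
      rw [hB] at hA
      exact hA
    have Zmid : ∀ a b, 3 ≤ a → 2 ≤ b → a + b = m + 3 → e a * e b = 0 := by
      intro a b ha hb hab
      have := Qconst (a - 3) b hb (by omega)
      simp only [show a - 3 + 3 = a by omega] at this
      rw [this]
      exact Q3
    have Q2 : e 2 * e (m + 1) = 0 := by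
      have hz := Zmid (m + 1) 2 (by omega) le_rfl (by omega)
      have h0 := ysym
      rw [hz] at h0
      simpa using h0
    have QN1 : e (m + 2) * x = 0 := by
      have h0 := Mlem x (e (m + 1))
      rw [hxe (m + 1) (by omega), S1 (m + 1) (by omega) (by omega), ← e2x, Q2] at h0
      simp only [zero_add, zero_mul, add_zero] at h0
      simpa only [show m + 1 + 1 = m + 2 by omega] using h0
    -- assembly
    rcases eq_or_lt_of_le hl with hl1 | hl2
    · have hk' : k = m + 2 := by omega
      rw [← hl1, hk', he1]
      exact QN1
    · rcases eq_or_lt_of_le hk with hk2 | hk3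
      · have hl' : l = m + 1 := by omega
        rw [← hk2, hl']
        exact Q2
      · exact Zmid k l (by omega) (by omega) (by omega)
  · -- small cases N ≤ 4
    have hN34 : N = 3 ∨ N = 4 := by omega
    rcases hN34 with h3 | h4
    · have hk2 : k = 2 := by omega
      have hl1 : l = 1 := by omega
      rw [hk2, hl1, e2x, he1]
      exact cube x
    · rcases (by omega : k = 2 ∧ l = 2 ∨ k = 3 ∧ l = 1) with ⟨hk2, hl2⟩ | ⟨hk3, hl1⟩
      · rw [hk2, hl2, e2x]
        exact q4 x
      · have e3e : e 3 = x * (x * x) := by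
          have h := heS 2 (by omega)
          rw [e2x] at h
          exact h
        rw [hk3, hl1, e3e, he1]
        have h0 := Mlem x (x * x)
        rw [q4 x, cube x] at h0
        simpa using h0
end

section
/- An algebra A over a field of characteristic not 2 is a unary Leibniz algebra (every one-generated subalgebra is a left Leibniz algebra) if and only if A satisfies the identities ⟨a,a,a⟩ = 0 and ⟨aa,a,a⟩ = 0 for all a ∈ A. -/
section Aux

variable {K A : Type*} [Field K] [NonUnitalNonAssocRing A] [Module K A]
  [SMulCommClass K A A] [IsScalarTower K A A]

private lemma half_cancel (hchar : (2 : K) ≠ 0) {z : A} (h : z + z = 0) : z = 0 := by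
  have h2 : (2 : K) • z = 0 := by
    rw [show (2 : K) = 1 + 1 by norm_num, add_smul, one_smul]; exact h
  have h3 := congrArg (fun w => (2 : K)⁻¹ • w) h2
  simpa [smul_smul, inv_mul_cancel₀ hchar] using h3

private lemma lemL1 (hchar : (2 : K) ≠ 0) (hI1 : ∀ a : A, (a * a) * a = 0) (a b : A) :
    (a * b) * a + (b * a) * a + (a * a) * b = 0 := by
  apply half_cancel hchar
  have h1 := hI1 (a + b)
  have h2 := hI1 (a - b)
  have h3 := hI1 b
  have key : ((a * b) * a + (b * a) * a + (a * a) * b) +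
      ((a * b) * a + (b * a) * a + (a * a) * b)
      = ((a + b) * (a + b)) * (a + b) - ((a - b) * (a - b)) * (a - b)
        - ((b * b) * b + (b * b) * b) := by
    simp only [add_mul, mul_add, sub_mul, mul_sub]
    abel
  rw [key, h1, h2, h3]; abel

private lemma lemML (hchar : (2 : K) ≠ 0) (hI1 : ∀ a : A, (a * a) * a = 0) (a b c : A) :
    (a * b) * c + (c * b) * a + (b * a) * c + (b * c) * a + (a * c) * b + (c * a) * b = 0 := by
  have h1 := lemL1 hchar hI1 (a + c) b
  have h2 := lemL1 hchar hI1 a b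
  have h3 := lemL1 hchar hI1 c b
  have key : (a * b) * c + (c * b) * a + (b * a) * c + (b * c) * a + (a * c) * b + (c * a) * b
      = (((a + c) * b) * (a + c) + (b * (a + c)) * (a + c) + ((a + c) * (a + c)) * b)
        - ((a * b) * a + (b * a) * a + (a * a) * b)
        - ((c * b) * c + (b * c) * c + (c * c) * b) := by
    simp only [add_mul, mul_add]
    abel
  rw [key, h1, h2, h3]; abel

private lemma lemL2 (hchar : (2 : K) ≠ 0) (hI2 : ∀ a : A, (a * a) * (a * a) = 0) (a b : A) :
    (a * a) * (a * b + b * a) + (a * b + b * a) * (a * a)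
      + (a * b + b * a) * (b * b) + (b * b) * (a * b + b * a) = 0 := by
  apply half_cancel hchar
  have h1 := hI2 (a + b)
  have h2 := hI2 (a - b)
  have key : ((a * a) * (a * b + b * a) + (a * b + b * a) * (a * a)
        + (a * b + b * a) * (b * b) + (b * b) * (a * b + b * a))
      + ((a * a) * (a * b + b * a) + (a * b + b * a) * (a * a)
        + (a * b + b * a) * (b * b) + (b * b) * (a * b + b * a))
      = ((a + b) * (a + b)) * ((a + b) * (a + b))
        - ((a - b) * (a - b)) * ((a - b) * (a - b)) := by
    simp only [add_mul, mul_add, sub_mul, mul_sub]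
    abel
  rw [key, h1, h2]; abel

private lemma lemL3 (hchar : (2 : K) ≠ 0) (hI2 : ∀ a : A, (a * a) * (a * a) = 0) (a b : A) :
    (a * a) * (b * b) + (b * b) * (a * a) + (a * b + b * a) * (a * b + b * a) = 0 := by
  apply half_cancel hchar
  have h1 := hI2 (a + b)
  have h2 := hI2 (a - b)
  have h3 := hI2 a
  have h4 := hI2 b
  have key : ((a * a) * (b * b) + (b * b) * (a * a) + (a * b + b * a) * (a * b + b * a))
      + ((a * a) * (b * b) + (b * b) * (a * a) + (a * b + b * a) * (a * b + b * a))
      = ((a + b) * (a + b)) * ((a + b) * (a + b))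
        + ((a - b) * (a - b)) * ((a - b) * (a - b))
        - ((a * a) * (a * a) + (a * a) * (a * a))
        - ((b * b) * (b * b) + (b * b) * (b * b)) := by
    simp only [add_mul, mul_add, sub_mul, mul_sub]
    abel
  rw [key, h1, h2, h3, h4]; abel

private lemma lemL4 (hchar : (2 : K) ≠ 0) (hI2 : ∀ a : A, (a * a) * (a * a) = 0) (a c b : A) :
    (a * c + c * a) * (b * b) + (b * b) * (a * c + c * a)
      + (a * b + b * a) * (c * b + b * c) + (c * b + b * c) * (a * b + b * a) = 0 := by
  have h1 := lemL3 hchar hI2 (a + c) b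
  have h2 := lemL3 hchar hI2 a b
  have h3 := lemL3 hchar hI2 c b
  have key : (a * c + c * a) * (b * b) + (b * b) * (a * c + c * a)
      + (a * b + b * a) * (c * b + b * c) + (c * b + b * c) * (a * b + b * a)
      = (((a + c) * (a + c)) * (b * b) + (b * b) * ((a + c) * (a + c))
          + ((a + c) * b + b * (a + c)) * ((a + c) * b + b * (a + c)))
        - ((a * a) * (b * b) + (b * b) * (a * a) + (a * b + b * a) * (a * b + b * a))
        - ((c * c) * (b * b) + (b * b) * (c * c) + (c * b + b * c) * (c * b + b * c)) := by
    simp only [add_mul, mul_add]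
    abel
  rw [key, h1, h2, h3]; abel

private lemma lemL5 (hchar : (2 : K) ≠ 0) (hI2 : ∀ a : A, (a * a) * (a * a) = 0) (a c b e : A) :
    (a * c + c * a) * (b * e + e * b) + (b * e + e * b) * (a * c + c * a)
      + (a * b + b * a) * (c * e + e * c) + (c * e + e * c) * (a * b + b * a)
      + (a * e + e * a) * (c * b + b * c) + (c * b + b * c) * (a * e + e * a) = 0 := by
  have h1 := lemL4 hchar hI2 a c (b + e)
  have h2 := lemL4 hchar hI2 a c b
  have h3 := lemL4 hchar hI2 a c e
  have key : (a * c + c * a) * (b * e + e * b) + (b * e + e * b) * (a * c + c * a)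
      + (a * b + b * a) * (c * e + e * c) + (c * e + e * c) * (a * b + b * a)
      + (a * e + e * a) * (c * b + b * c) + (c * b + b * c) * (a * e + e * a)
      = ((a * c + c * a) * ((b + e) * (b + e)) + ((b + e) * (b + e)) * (a * c + c * a)
          + (a * (b + e) + (b + e) * a) * (c * (b + e) + (b + e) * c)
          + (c * (b + e) + (b + e) * c) * (a * (b + e) + (b + e) * a))
        - ((a * c + c * a) * (b * b) + (b * b) * (a * c + c * a)
          + (a * b + b * a) * (c * b + b * c) + (c * b + b * c) * (a * b + b * a))
        - ((a * c + c * a) * (e * e) + (e * e) * (a * c + c * a)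
          + (a * e + e * a) * (c * e + e * c) + (c * e + e * c) * (a * e + e * a)) := by
    simp only [add_mul, mul_add]
    abel
  rw [key, h1, h2, h3]; abel

private lemma lemL6 (hchar : (2 : K) ≠ 0) (hI2 : ∀ a : A, (a * a) * (a * a) = 0) (a c b : A) :
    (a * a) * (c * b + b * c) + (c * b + b * c) * (a * a)
      + (c * c) * (a * b + b * a) + (a * b + b * a) * (c * c)
      + (a * c + c * a) * (a * b + b * a) + (a * b + b * a) * (a * c + c * a)
      + (a * c + c * a) * (c * b + b * c) + (c * b + b * c) * (a * c + c * a) = 0 := by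
  have h1 := lemL2 hchar hI2 (a + c) b
  have h2 := lemL2 hchar hI2 a b
  have h3 := lemL2 hchar hI2 c b
  have key : (a * a) * (c * b + b * c) + (c * b + b * c) * (a * a)
      + (c * c) * (a * b + b * a) + (a * b + b * a) * (c * c)
      + (a * c + c * a) * (a * b + b * a) + (a * b + b * a) * (a * c + c * a)
      + (a * c + c * a) * (c * b + b * c) + (c * b + b * c) * (a * c + c * a)
      = (((a + c) * (a + c)) * ((a + c) * b + b * (a + c))
          + ((a + c) * b + b * (a + c)) * ((a + c) * (a + c))
          + ((a + c) * b + b * (a + c)) * (b * b)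
          + (b * b) * ((a + c) * b + b * (a + c)))
        - ((a * a) * (a * b + b * a) + (a * b + b * a) * (a * a)
          + (a * b + b * a) * (b * b) + (b * b) * (a * b + b * a))
        - ((c * c) * (c * b + b * c) + (c * b + b * c) * (c * c)
          + (c * b + b * c) * (b * b) + (b * b) * (c * b + b * c)) := by
    simp only [add_mul, mul_add]
    abel
  rw [key, h1, h2, h3]; abel

/-- `seq x n` is the left-normed power `x, x·x, x·(x·x), …` (0-indexed). -/
private def seq (x : A) : ℕ → A
  | 0 => x
  | n + 1 => x * seq x n

private lemma master (hchar : (2 : K) ≠ 0) (hI1 : ∀ a : A, (a * a) * a = 0)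
    (hI2 : ∀ a : A, (a * a) * (a * a) = 0) (x : A) :
    ∀ t : ℕ, (∀ n m, 1 ≤ n → n + m ≤ t → seq x n * seq x m = 0) ∧
      (∀ k, 1 ≤ k → k + 1 ≤ t → seq x k * seq x k = 0) := by
  intro t
  induction t with
  | zero => exact ⟨fun n m h1 h2 => by omega, fun k h1 h2 => by omega⟩
  | succ t ih =>
    match t, ih with
    | 0, _ =>
      refine ⟨fun n m h1 h2 => ?_, fun k h1 h2 => by omega⟩
      have hn : n = 1 ∧ m = 0 := by omega
      obtain ⟨rfl, rfl⟩ := hn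
      exact hI1 x
    | 1, ih =>
      refine ⟨fun n m h1 h2 => ?_, fun k h1 h2 => ?_⟩
      · -- cases (1,0), (1,1), (2,0)
        have hz10 : seq x 1 * seq x 0 = 0 := hI1 x
        have hz11 : seq x 1 * seq x 1 = 0 := hI2 x
        have hz20 : seq x 2 * seq x 0 = 0 := by
          have h := lemL1 hchar hI1 x (seq x 1)
          -- (x * x₂)*x + (x₂*x)*x + (x*x)*x₂ = 0
          have : seq x 2 * seq x 0 + (seq x 1 * seq x 0) * seq x 0
              + seq x 1 * seq x 1 = 0 := h
          rw [hz10, hz11, zero_mul] at this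
          simpa using this
        have hcase : (n = 1 ∧ m = 0) ∨ (n = 1 ∧ m = 1) ∨ (n = 2 ∧ m = 0) := by omega
        rcases hcase with ⟨rfl, rfl⟩ | ⟨rfl, rfl⟩ | ⟨rfl, rfl⟩
        · exact hz10
        · exact hz11
        · exact hz20
      · have hk : k = 1 := by omega
        subst hk; exact hI2 x
    | (s + 2), ih =>
      obtain ⟨ihZ, ihD⟩ := ih
      set y : ℕ → A := seq x with hy
      have hy0 : y 0 = x := rfl
      have hysucc : ∀ n, y (n + 1) = x * y n := fun n => rfl
      -- R3 relation
      have hR3 : ∀ i j, 1 ≤ i → 1 ≤ j → i + j = s + 2 →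
          y (i + 1) * y j + y (j + 1) * y i = 0 := by
        intro i j hi hj hij
        have h := lemML hchar hI1 (y i) x (y j)
        have e1 : y i * x = 0 := by
          have := ihZ i 0 hi (by omega); simpa [hy0] using this
        have e2 : y j * x = 0 := by
          have := ihZ j 0 hj (by omega); simpa [hy0] using this
        have e3 : y i * y j = 0 := ihZ i j hi (by omega)
        have e4 : y j * y i = 0 := ihZ j i hj (by omega)
        rw [e1, e2, e3, e4] at h
        simp only [zero_mul, mul_zero, zero_add, add_zero] at h
        have hxi : x * y i = y (i + 1) := rfl
        have hxj : x * y j = y (j + 1) := rfl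
        rw [hxi, hxj] at h
        exact h
      -- R2 relation
      have hR2 : ∀ i j, 1 ≤ i → 1 ≤ j → i + j = s + 1 →
          y (i + 1) * y (j + 1) + y (j + 1) * y (i + 1) = 0 := by
        intro i j hi hj hij
        apply half_cancel hchar
        have h := lemL5 hchar hI2 x x (y i) (y j)
        have e1 : y i * x = 0 := by
          have := ihZ i 0 hi (by omega); simpa [hy0] using this
        have e2 : y j * x = 0 := by
          have := ihZ j 0 hj (by omega); simpa [hy0] using this
        have e3 : y i * y j = 0 := ihZ i j hi (by omega)
        have e4 : y j * y i = 0 := ihZ j i hj (by omega)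
        have hxi : x * y i = y (i + 1) := rfl
        have hxj : x * y j = y (j + 1) := rfl
        rw [hxi, hxj, e1, e2, e3, e4] at h
        simp only [zero_mul, mul_zero, zero_add, add_zero] at h
        rw [← h]; all_goals abel
      -- the chain
      have chain : ∀ r q, 1 ≤ r → 2 ≤ q → q + r = s + 3 →
          y q * y r = y (s + 2) * y 1 := by
        intro r
        induction r with
        | zero => intro q h; omega
        | succ r ihr =>
          intro q hr hq hqr
          rcases Nat.eq_zero_or_pos r with hr0 | hr1
          · subst hr0
            have : q = s + 2 := by omega
            subst this; rfl
          · obtain ⟨i, rfl⟩ : ∃ i, q = i + 1 := ⟨q - 1, by omega⟩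
            have h2 : y (i + 1) * y (r + 1) + y (r + 1) * y (i + 1) = 0 :=
              hR2 i r (by omega) hr1 (by omega)
            have h3 : y (r + 1) * y (i + 1) + y (i + 2) * y r = 0 :=
              hR3 r (i + 1) hr1 (by omega) (by omega)
            have e1 : y (i + 1) * y (r + 1) = -(y (r + 1) * y (i + 1)) :=
              eq_neg_of_add_eq_zero_left h2
            have e2 : y (r + 1) * y (i + 1) = -(y (i + 2) * y r) :=
              eq_neg_of_add_eq_zero_left h3
            rw [e1, e2, neg_neg]
            exact ihr (i + 2) hr1 (by omega) (by omega)
      have hu : y (s + 2) * y 1 = 0 := by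
        apply half_cancel hchar
        have h3 : y 2 * y (s + 1) + y (s + 2) * y 1 = 0 :=
          hR3 1 (s + 1) (by omega) (by omega) (by omega)
        have hc : y 2 * y (s + 1) = y (s + 2) * y 1 :=
          chain (s + 1) 2 (by omega) (by omega) (by omega)
        rw [hc] at h3
        exact h3
      have hall : ∀ q r, 2 ≤ q → 1 ≤ r → q + r = s + 3 → y q * y r = 0 := by
        intro q r hq hr hqr
        rw [chain r q hr hq hqr]; exact hu
      -- Z 1 (s+2)
      have hz1 : y 1 * y (s + 2) = 0 := by
        have h := lemL2 hchar hI2 x (y (s + 1))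
        have e1 : y (s + 1) * x = 0 := by
          have := ihZ (s + 1) 0 (by omega) (by omega); simpa [hy0] using this
        have e2 : y (s + 1) * y (s + 1) = 0 := ihD (s + 1) (by omega) (by omega)
        have hxw : x * y (s + 1) = y (s + 2) := rfl
        rw [hxw, e1, e2] at h
        simp only [zero_mul, mul_zero, zero_add, add_zero] at h
        have hxx : x * x = y 1 := rfl
        rw [hxx] at h
        have e3 : y 1 * y (s + 2) = -(y (s + 2) * y 1) := eq_neg_of_add_eq_zero_left h
        rw [e3, hu, neg_zero]
      -- Z (s+3) 0
      have hz0 : y (s + 3) * y 0 = 0 := by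
        have h := lemL1 hchar hI1 x (y (s + 2))
        have e1 : y (s + 2) * x = 0 := by
          have := ihZ (s + 2) 0 (by omega) (by omega); simpa [hy0] using this
        have hxw : x * y (s + 2) = y (s + 3) := rfl
        rw [hxw, e1, zero_mul] at h
        have h2 : y (s + 3) * x + (x * x) * y (s + 2) = 0 := by simpa using h
        have h3 : (x * x) * y (s + 2) = y 1 * y (s + 2) := rfl
        rw [h3, hz1] at h2
        simpa [hy0] using h2
      -- new diagonal
      have hDnew : y (s + 2) * y (s + 2) = 0 := by
        apply half_cancel hchar
        have h := lemL6 hchar hI2 x (y (s + 1)) (y (s + 1))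
        have e1 : y (s + 1) * x = 0 := by
          have := ihZ (s + 1) 0 (by omega) (by omega); simpa [hy0] using this
        have e2 : y (s + 1) * y (s + 1) = 0 := ihD (s + 1) (by omega) (by omega)
        have hxw : x * y (s + 1) = y (s + 2) := rfl
        rw [hxw, e1, e2] at h
        simp only [zero_mul, mul_zero, zero_add, add_zero] at h
        rw [← h]; all_goals abel
      refine ⟨fun n m h1 h2 => ?_, fun k h1 h2 => ?_⟩
      · rcases Nat.lt_or_ge (n + m) (s + 3) with hlt | hge
        · exact ihZ n m h1 (by omega)
        · have hsum : n + m = s + 3 := by omega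
          rcases Nat.eq_zero_or_pos m with hm0 | hm1
          · subst hm0
            have : n = s + 3 := by omega
            subst this; exact hz0
          · rcases Nat.lt_or_ge n 2 with hn1 | hn2
            · have hn : n = 1 := by omega
              have hm : m = s + 2 := by omega
              subst hn; subst hm; exact hz1
            · exact hall n m hn2 hm1 hsum
      · rcases Nat.lt_or_ge (k + 1) (s + 3) with hlt | hge
        · exact ihD k h1 (by omega)
        · have : k = s + 2 := by omega
          subst this; exact hDnew

end Aux

theorem stmt_1 {K A : Type*} [Field K] [NonUnitalNonAssocRing A] [Module K A]
    [SMulCommClass K A A] [IsScalarTower K A A] (hchar : (2 : K) ≠ 0) :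
    (∀ x : A, ∀ a ∈ NonUnitalAlgebra.adjoin K ({x} : Set A),
      ∀ b ∈ NonUnitalAlgebra.adjoin K ({x} : Set A),
      ∀ c ∈ NonUnitalAlgebra.adjoin K ({x} : Set A), leibTriple a b c = 0) ↔
    (∀ a : A, leibTriple a a a = 0 ∧ leibTriple (a * a) a a = 0) := by
  constructor
  · intro H a
    have ha : a ∈ NonUnitalAlgebra.adjoin K ({a} : Set A) :=
      NonUnitalAlgebra.self_mem_adjoin_singleton K a
    have haa : a * a ∈ NonUnitalAlgebra.adjoin K ({a} : Set A) := mul_mem ha ha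
    exact ⟨H a a ha a ha a ha, H a (a * a) haa a ha a ha⟩
  · intro h x
    -- basic identities
    have subadd : ∀ u v : A, u - v + v = u := fun u v => by abel
    have hI1 : ∀ a : A, (a * a) * a = 0 := by
      intro a
      have h1 := (h a).1
      unfold leibTriple at h1
      rw [subadd] at h1
      exact h1
    have hI2 : ∀ a : A, (a * a) * (a * a) = 0 := by
      intro a
      have h2 := (h a).2
      unfold leibTriple at h2
      rw [hI1 a] at h2
      simp only [zero_mul, mul_zero, zero_sub, add_zero, neg_eq_zero] at h2
      exact h2
    have hZ : ∀ n m, 1 ≤ n → seq x n * seq x m = 0 := fun n m hn =>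
      (master hchar hI1 hI2 x (n + m)).1 n m hn le_rfl
    -- the span of the powers
    set sp : Submodule K A := Submodule.span K (Set.range (seq x)) with hsp
    have hmem : ∀ n, seq x n ∈ sp := fun n =>
      Submodule.subset_span (Set.mem_range_self n)
    -- products of basis elements stay in the span
    have hmulbase : ∀ i j, seq x i * seq x j ∈ sp := by
      intro i j
      match i with
      | 0 => exact hmem (j + 1)
      | (n + 1) => rw [hZ (n + 1) j (by omega)]; exact zero_mem sp
    have hmul : ∀ u ∈ sp, ∀ v ∈ sp, u * v ∈ sp := by
      intro u hu
      induction hu using Submodule.span_induction with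
      | mem u hu' =>
        obtain ⟨i, rfl⟩ := hu'
        intro v hv
        induction hv using Submodule.span_induction with
        | mem v hv' => obtain ⟨j, rfl⟩ := hv'; exact hmulbase i j
        | zero => rw [mul_zero]; exact zero_mem sp
        | add v w _ _ pv pw => rw [mul_add]; exact add_mem pv pw
        | smul k v _ pv => rw [mul_smul_comm]; exact Submodule.smul_mem sp k pv
      | zero => intro v hv; rw [zero_mul]; exact zero_mem sp
      | add u w _ _ pu pw => intro v hv; rw [add_mul]; exact add_mem (pu v hv) (pw v hv)
      | smul k u _ pu =>
        intro v hv; rw [smul_mul_assoc]; exact Submodule.smul_mem sp k (pu v hv)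
    -- adjoin ⊆ span
    have hadj : ∀ a ∈ NonUnitalAlgebra.adjoin K ({x} : Set A), a ∈ sp := by
      intro a ha
      induction ha using NonUnitalAlgebra.adjoin_induction with
      | mem a ha' =>
        rw [Set.mem_singleton_iff] at ha'
        subst ha'; exact hmem 0
      | add u v _ _ pu pv => exact add_mem pu pv
      | zero => exact zero_mem sp
      | mul u v _ _ pu pv => exact hmul u pu v pv
      | smul k u _ pu => exact Submodule.smul_mem sp k pu
    -- the triple vanishes on basis elements
    have hbase : ∀ i j k : ℕ, leibTriple (seq x i) (seq x j) (seq x k) = 0 := by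
      intro i j k
      unfold leibTriple
      match i, j with
      | 0, 0 =>
        have e : seq x 0 * seq x j = seq x (j + 1) := rfl
        show (seq x 0 * seq x 0) * seq x k - seq x 0 * (seq x 0 * seq x k)
            + seq x 0 * (seq x 0 * seq x k) = 0
        rw [subadd]
        show seq x 1 * seq x k = 0
        exact hZ 1 k (by omega)
      | 0, (m + 1) =>
        have e1 : seq x 0 * seq x (m + 1) = seq x (m + 2) := rfl
        have e2 : seq x 0 * seq x k = seq x (k + 1) := rfl
        rw [e1, e2, hZ (m + 2) k (by omega), hZ (m + 1) k (by omega),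
          hZ (m + 1) (k + 1) (by omega)]
        simp
      | (n + 1), j =>
        rw [hZ (n + 1) j (by omega), hZ (n + 1) k (by omega), zero_mul, mul_zero]
        have : seq x j * seq x k = 0 ∨ seq x j * seq x k = seq x (k + 1) := by
          match j with
          | 0 => exact Or.inr rfl
          | (m + 1) => exact Or.inl (hZ (m + 1) k (by omega))
        rcases this with e | e
        · rw [e, mul_zero]; simp
        · rw [e, hZ (n + 1) (k + 1) (by omega)]; simp
    -- linearity of the triple in each slot
    intro a ha b hb c hc
    have ha' := hadj a ha
    have hb' := hadj b hb
    have hc' := hadj c hc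
    clear ha hb hc
    induction ha' using Submodule.span_induction with
    | mem a ha' =>
      obtain ⟨i, rfl⟩ := ha'
      induction hb' using Submodule.span_induction with
      | mem b hb' =>
        obtain ⟨j, rfl⟩ := hb'
        induction hc' using Submodule.span_induction with
        | mem c hc' => obtain ⟨k, rfl⟩ := hc'; exact hbase i j k
        | zero => simp [leibTriple]
        | add c d _ _ pc pd =>
          have e : leibTriple (seq x i) (seq x j) (c + d)
              = leibTriple (seq x i) (seq x j) c + leibTriple (seq x i) (seq x j) d := by
            unfold leibTriple
            simp only [mul_add]
            abel
          rw [e, pc, pd, add_zero]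
        | smul k c _ pc =>
          have e : leibTriple (seq x i) (seq x j) (k • c)
              = k • leibTriple (seq x i) (seq x j) c := by
            unfold leibTriple
            simp only [mul_smul_comm, smul_mul_assoc, smul_sub, smul_add]
          rw [e, pc, smul_zero]
      | zero => simp [leibTriple]
      | add b d _ _ pb pd =>
        have e : leibTriple (seq x i) (b + d) c
            = leibTriple (seq x i) b c + leibTriple (seq x i) d c := by
          unfold leibTriple
          simp only [mul_add, add_mul]
          abel
        rw [e, pb, pd, add_zero]
      | smul k b _ pb =>
        have e : leibTriple (seq x i) (k • b) c = k • leibTriple (seq x i) b c := by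
          unfold leibTriple
          simp only [mul_smul_comm, smul_mul_assoc, smul_sub, smul_add]
        rw [e, pb, smul_zero]
    | zero => simp [leibTriple]
    | add a d _ _ pa pd =>
      have e : leibTriple (a + d) b c = leibTriple a b c + leibTriple d b c := by
        unfold leibTriple
        simp only [mul_add, add_mul]
        abel
      rw [e, pa, pd, add_zero]
    | smul k a _ pa =>
      have e : leibTriple (k • a) b c = k • leibTriple a b c := by
        unfold leibTriple
        simp only [mul_smul_comm, smul_mul_assoc, smul_sub, smul_add]
      rw [e, pa, smul_zero]
end

section
/- Every algebra over a field of characteristic not 2 satisfying ⟨a,a,b⟩ = 0, ⟨a,b,a⟩ = 0, and ⟨a,b,ab⟩ = 0 for all a,b also satisfies ⟨a,a,a⟩ = 0 and ⟨aa,a,a⟩ = 0; i.e., every binary Leibniz algebra is unary Leibniz. -/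
theorem stmt_10 {K A : Type*} [Field K] [NonUnitalNonAssocRing A] [Module K A]
    [SMulCommClass K A A] [IsScalarTower K A A] (hchar : (2 : K) ≠ 0)
    (h1 : ∀ a b : A, leibTriple a a b = 0)
    (h2 : ∀ a b : A, leibTriple a b a = 0)
    (h3 : ∀ a b : A, leibTriple a b (a * b) = 0) :
    ∀ a : A, leibTriple a a a = 0 ∧ leibTriple (a * a) a a = 0 := by
  intro a
  have haaa : (a * a) * a = 0 := by
    have := h1 a a
    simp only [leibTriple] at this
    rwa [sub_add_cancel] at this
  have hsq : (a * a) * (a * a) = 0 := by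
    have := h3 a a
    simp only [leibTriple] at this
    rwa [sub_add_cancel] at this
  constructor <;> simp [leibTriple, haaa, hsq]
end

section
/- The four-dimensional anticommutative algebra A with basis e1, e2, e3, e4 and nonzero products e1e2 = e3 = -e2e1, e1e4 = e1 = -e4e1, e2e4 = e2 = -e4e2, e3e4 = -e3 = -e4e3 satisfies ⟨a,a,b⟩ = 0, ⟨a,b,a⟩ = 0, and ⟨a,b,ab⟩ = 0 for all a,b, but is not a Leibniz algebra since ⟨e1,e2,e4⟩ = -3e3 ≠ 0. -/
/-- Multiplication of the 4-dimensional anticommutative algebra A with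
e1e2 = e3, e1e4 = e1, e2e4 = e2, e3e4 = -e3 (extended bilinearly and
anticommutatively); basis vectors are indexed 0,1,2,3. -/
def mulA {K : Type*} [Field K] (v w : Fin 4 → K) : Fin 4 → K :=
  ![v 0 * w 3 - v 3 * w 0,
    v 1 * w 3 - v 3 * w 1,
    (v 0 * w 1 - v 1 * w 0) - (v 2 * w 3 - v 3 * w 2),
    0]

/-- The Leibniz discriminant ⟨a,b,c⟩ with respect to mulA. -/
def ltA {K : Type*} [Field K] (a b c : Fin 4 → K) : Fin 4 → K :=
  mulA (mulA a b) c - mulA a (mulA b c) + mulA b (mulA a c)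

theorem stmt_11 {K : Type*} [Field K] (h2 : (2 : K) ≠ 0) (h3 : (3 : K) ≠ 0) :
    (∀ a b : Fin 4 → K, ltA a a b = 0 ∧ ltA a b a = 0 ∧ ltA a b (mulA a b) = 0) ∧
    ltA (Pi.single 0 1) (Pi.single 1 1) (Pi.single 3 1) =
      (-3 : K) • (Pi.single 2 1 : Fin 4 → K) ∧
    ltA (Pi.single 0 1) (Pi.single 1 1) (Pi.single 3 1) ≠ (0 : Fin 4 → K) := by
  have key : ltA (Pi.single 0 1) (Pi.single 1 1) (Pi.single 3 1) =
      (-3 : K) • (Pi.single 2 1 : Fin 4 → K) := by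
    funext i
    fin_cases i <;>
      simp [ltA, mulA, Pi.single_apply] <;> ring
  refine ⟨fun a b => ⟨?_, ?_, ?_⟩, key, ?_⟩
  · funext i; fin_cases i <;> simp [ltA, mulA] <;> ring_nf <;> simp <;> tauto
  · funext i; fin_cases i <;> simp [ltA, mulA] <;> ring_nf <;> simp <;> tauto
  · funext i; fin_cases i <;> simp [ltA, mulA] <;> ring_nf <;> simp <;> tauto
  · rw [key]
    intro h
    have := congrFun h 2
    simp [Pi.single_apply] at this
    exact h3 this
end

section
/- Every Malcev dialgebra over a field of characteristic not 2 satisfies the binary Lie dialgebra identity: a(b(cd)) + a(c(bd)) - ((ac)b)d - ((ab)c)d - b(a(cd)) - c(a(bd)) + b((ca)d) + c((ba)d) = 0 for all a,b,c,d. -/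
theorem stmt_19 {K A : Type*} [Field K] [NonUnitalNonAssocRing A] [Module K A]
    [SMulCommClass K A A] [IsScalarTower K A A] (hchar : (2 : K) ≠ 0)
    (anti : ∀ a b c : A, (a * b) * c + (b * a) * c = 0)
    (dimalcev : ∀ a b c d : A,
      a * (b * (c * d)) - b * (c * (a * d)) - c * ((a * b) * d)
        - (a * c) * (b * d) - (a * (b * c)) * d = 0) :
    ∀ a b c d : A,
      a * (b * (c * d)) + a * (c * (b * d)) - ((a * c) * b) * d - ((a * b) * c) * d
        - b * (a * (c * d)) - c * (a * (b * d)) + b * ((c * a) * d)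
        + c * ((b * a) * d) = 0 := by
  intro a b c d
  linear_combination (norm := abel) -dimalcev b a c d - dimalcev c a b d
    - anti b c (a * d) - anti b (a * c) d - anti c (a * b) d
end
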